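/- In a strictly quasi-submodular symmetric aggregative game, the aggregate-taking strategy is unique. -/
import Mathlib


/-- In a strictly quasi-submodular symmetric aggregative game with strictly monotone
aggregator, the aggregate-taking strategy is unique. -/
theorem ats_unique
    (n : ℕ) (hn : 2 ≤ n) (S : Finset ℝ)
    (g : (Fin n → ℝ) → ℝ) (pay : ℝ → ℝ → ℝ)
    (hgsym : ∀ (σ : Equiv.Perm (Fin n)) (s : Fin n → ℝ), g (s ∘ σ) = g s)
    (hgmono : StrictMono g)
    (hqsm1 : ∀ s1 s2 t1 t2 : ℝ, s1 < s2 → t1 < t2 →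
      pay s2 t1 ≤ pay s1 t1 → pay s2 t2 < pay s1 t2)
    (hqsm2 : ∀ s1 s2 t1 t2 : ℝ, s1 < s2 → t1 < t2 →
      pay s1 t2 ≤ pay s2 t2 → pay s1 t1 > pay s2 t1)
    (s1 s2 : ℝ) (hs1 : s1 ∈ S) (hs2 : s2 ∈ S)
    (hATS1 : ∀ s ∈ S, pay s (g fun _ => s1) ≤ pay s1 (g fun _ => s1))
    (hATS2 : ∀ s ∈ S, pay s (g fun _ => s2) ≤ pay s2 (g fun _ => s2)) :
    s1 = s2 := by
  have key : ∀ a b : ℝ, a ∈ S → b ∈ S → a < b →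
      (∀ s ∈ S, pay s (g fun _ => a) ≤ pay a (g fun _ => a)) →
      (∀ s ∈ S, pay s (g fun _ => b) ≤ pay b (g fun _ => b)) → False := by
    intro a b ha hb hab hA hB
    have hlt : (fun _ : Fin n => a) < (fun _ : Fin n => b) := by
      refine Pi.lt_def.2 ⟨fun i => hab.le, ⟨0, by omega⟩, hab⟩
    have ht : g (fun _ => a) < g (fun _ => b) := hgmono hlt
    exact absurd (hB a ha) (not_le.2 (hqsm1 a b _ _ hab ht (hA b hb)))
  rcases lt_trichotomy s1 s2 with h | h | h
  · exact absurd (key s1 s2 hs1 hs2 h hATS1 hATS2) (by simp)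
  · exact h
  · exact absurd (key s2 s1 hs2 hs1 h hATS2 hATS1) (by simp)
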